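/- If a quadrant model S has an infinite group G(S), then S admits no rational invariants: there is no I(x) ∈ ℚ(x,t)\ℚ(t) and J(y) ∈ ℚ(y,t) such that K(x,y) divides the numerator of I(x) - J(y). -/

import Mathlib

open MvPolynomial

noncomputable section NRIaux

namespace NRI

abbrev MP2 := MvPolynomial (Fin 2) ℚ
abbrev FF := FractionRing MP2
abbrev AA := Polynomial ℚ
abbrev BB := Polynomial AA

def xx : FF := algebraMap MP2 FF (MvPolynomial.X 0)
def yy : FF := algebraMap MP2 FF (MvPolynomial.X 1)

lemma xx_ne : xx ≠ 0 := by
  simpa [xx] using fun h => MvPolynomial.X_ne_zero (R := ℚ) (0 : Fin 2)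
    (IsFractionRing.injective MP2 FF (by simpa using h))

lemma yy_ne : yy ≠ 0 := by
  simpa [yy] using fun h => MvPolynomial.X_ne_zero (R := ℚ) (1 : Fin 2)
    (IsFractionRing.injective MP2 FF (by simpa using h))

/-- the iso with outer variable `X 0`, inner `X 1` -/
def EE : MP2 ≃ₐ[ℚ] BB :=
  (MvPolynomial.finSuccEquiv ℚ 1).trans
    (Polynomial.mapAlgEquiv
      (((MvPolynomial.renameEquiv ℚ (Equiv.equivPUnit.{1} (Fin 1)) :
          MvPolynomial (Fin 1) ℚ ≃ₐ[ℚ] MvPolynomial PUnit.{1} ℚ)).trans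
        (MvPolynomial.pUnitAlgEquiv ℚ)))

lemma EE_X0 : EE (MvPolynomial.X 0) = Polynomial.X := by
  simp [EE, MvPolynomial.finSuccEquiv_X_zero]

lemma EE_X1 : EE (MvPolynomial.X 1) = Polynomial.C Polynomial.X := by
  have h1 : (MvPolynomial.X (R := ℚ) (1 : Fin 2)) = MvPolynomial.X (Fin.succ 0) := rfl
  rw [EE, AlgEquiv.trans_apply, h1, MvPolynomial.finSuccEquiv_X_succ]
  simp

/-- the iso with outer variable `X 1`, inner `X 0` -/
def Ef : MP2 ≃ₐ[ℚ] BB :=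
  (MvPolynomial.renameEquiv ℚ (Equiv.swap 0 1)).trans EE

lemma Ef_X1 : Ef (MvPolynomial.X 1) = Polynomial.X := by
  simp [Ef, MvPolynomial.renameEquiv_apply, MvPolynomial.rename_X, EE_X0]

lemma Ef_X0 : Ef (MvPolynomial.X 0) = Polynomial.C Polynomial.X := by
  simp [Ef, MvPolynomial.renameEquiv_apply, MvPolynomial.rename_X, EE_X1]


def βE : BB →+* FF := (algebraMap MP2 FF).comp EE.symm.toAlgHom.toRingHom
def βf : BB →+* FF := (algebraMap MP2 FF).comp Ef.symm.toAlgHom.toRingHom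

lemma βE_inj : Function.Injective βE :=
  (IsFractionRing.injective MP2 FF).comp EE.symm.injective

lemma βf_inj : Function.Injective βf :=
  (IsFractionRing.injective MP2 FF).comp Ef.symm.injective

lemma βE_EE (p : MP2) : βE (EE p) = algebraMap MP2 FF p := by
  simp [βE]

lemma βf_Ef (p : MP2) : βf (Ef p) = algebraMap MP2 FF p := by
  simp [βf]

lemma algebraMap_C (r : ℚ) : algebraMap MP2 FF (MvPolynomial.C r) = algebraMap ℚ FF r := by
  have h1 := eq_ratCast ((algebraMap MP2 FF).comp (MvPolynomial.C : ℚ →+* MP2)) r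
  have h2 := eq_ratCast (algebraMap ℚ FF) r
  simp only [RingHom.comp_apply] at h1
  rw [h1, h2]

lemma EE_C (r : ℚ) : EE (MvPolynomial.C r) = Polynomial.C (Polynomial.C r) := by
  have : (MvPolynomial.C r : MP2) = algebraMap ℚ MP2 r := rfl
  rw [this, AlgEquiv.commutes]
  rfl

lemma Ef_C (r : ℚ) : Ef (MvPolynomial.C r) = Polynomial.C (Polynomial.C r) := by
  have : (MvPolynomial.C r : MP2) = algebraMap ℚ MP2 r := rfl
  rw [this, AlgEquiv.commutes]
  rfl

lemma βf_CX : βf (Polynomial.C Polynomial.X) = xx := by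
  have := βf_Ef (MvPolynomial.X 0)
  rwa [Ef_X0] at this

lemma βE_CX : βE (Polynomial.C Polynomial.X) = yy := by
  have := βE_EE (MvPolynomial.X 1)
  rwa [EE_X1] at this

lemma βE_X : βE Polynomial.X = xx := by
  have := βE_EE (MvPolynomial.X 0)
  rwa [EE_X0] at this

lemma βf_X : βf Polynomial.X = yy := by
  have := βf_Ef (MvPolynomial.X 1)
  rwa [Ef_X1] at this

lemma βE_C (a : AA) : βE (Polynomial.C a) = Polynomial.aeval yy a := by
  have h : βE.comp (Polynomial.C : AA →+* BB)
      = ((Polynomial.aeval yy : AA →ₐ[ℚ] FF) : AA →+* FF) := by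
    apply Polynomial.ringHom_ext
    · intro r
      simp only [RingHom.comp_apply, RingHom.coe_coe]
      rw [show (Polynomial.C (Polynomial.C r) : BB) = EE (MvPolynomial.C r) from (EE_C r).symm,
        βE_EE, algebraMap_C]
      simp
    · simp only [RingHom.comp_apply, RingHom.coe_coe]
      rw [show (Polynomial.C (Polynomial.X : AA) : BB) = EE (MvPolynomial.X 1) from EE_X1.symm,
        βE_EE]
      simp [yy]
  exact congrFun (congrArg (fun g : AA →+* FF => (g : AA → FF)) h) a

lemma βf_C (a : AA) : βf (Polynomial.C a) = Polynomial.aeval xx a := by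
  have h : βf.comp (Polynomial.C : AA →+* BB)
      = ((Polynomial.aeval xx : AA →ₐ[ℚ] FF) : AA →+* FF) := by
    apply Polynomial.ringHom_ext
    · intro r
      simp only [RingHom.comp_apply, RingHom.coe_coe]
      rw [show (Polynomial.C (Polynomial.C r) : BB) = Ef (MvPolynomial.C r) from (Ef_C r).symm,
        βf_Ef, algebraMap_C]
      simp
    · simp only [RingHom.comp_apply, RingHom.coe_coe]
      rw [show (Polynomial.C (Polynomial.X : AA) : BB) = Ef (MvPolynomial.X 0) from Ef_X0.symm,
        βf_Ef]
      simp [xx]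
  exact congrFun (congrArg (fun g : AA →+* FF => (g : AA → FF)) h) a

/-- Evaluation of `p` at `![u, τ]` through the decomposition `Ef` (outer variable = `X 1`). -/
lemma aeval_eq_tower_Ef (u τ : FF) (p : MP2) :
    MvPolynomial.aeval ![u, τ] p
      = Polynomial.aevalTower (Polynomial.aeval u : AA →ₐ[ℚ] FF) τ (Ef p) := by
  have h : (MvPolynomial.aeval ![u, τ] : MP2 →ₐ[ℚ] FF)
      = (Polynomial.aevalTower (Polynomial.aeval u : AA →ₐ[ℚ] FF) τ).comp Ef.toAlgHom := by
    apply MvPolynomial.algHom_ext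
    intro i
    fin_cases i
    · show MvPolynomial.aeval ![u, τ] (MvPolynomial.X 0) = (Polynomial.aevalTower (Polynomial.aeval u : AA →ₐ[ℚ] FF) τ) (Ef.toAlgHom (MvPolynomial.X 0))
      change _ = (Polynomial.aevalTower (Polynomial.aeval u : AA →ₐ[ℚ] FF) τ) (Ef (MvPolynomial.X 0))
      rw [show Ef (MvPolynomial.X 0) = Polynomial.C Polynomial.X from Ef_X0]
      simp
    · show MvPolynomial.aeval ![u, τ] (MvPolynomial.X 1) = (Polynomial.aevalTower (Polynomial.aeval u : AA →ₐ[ℚ] FF) τ) (Ef.toAlgHom (MvPolynomial.X 1))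
      change _ = (Polynomial.aevalTower (Polynomial.aeval u : AA →ₐ[ℚ] FF) τ) (Ef (MvPolynomial.X 1))
      rw [show Ef (MvPolynomial.X 1) = Polynomial.X from Ef_X1]
      simp
  exact congrFun (congrArg (fun g : MP2 →ₐ[ℚ] FF => (g : MP2 → FF)) h) p

/-- Evaluation of `p` at `![u, τ]` through the decomposition `EE` (outer variable = `X 0`). -/
lemma aeval_eq_tower_EE (u τ : FF) (p : MP2) :
    MvPolynomial.aeval ![u, τ] p
      = Polynomial.aevalTower (Polynomial.aeval τ : AA →ₐ[ℚ] FF) u (EE p) := by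
  have h : (MvPolynomial.aeval ![u, τ] : MP2 →ₐ[ℚ] FF)
      = (Polynomial.aevalTower (Polynomial.aeval τ : AA →ₐ[ℚ] FF) u).comp EE.toAlgHom := by
    apply MvPolynomial.algHom_ext
    intro i
    fin_cases i
    · show MvPolynomial.aeval ![u, τ] (MvPolynomial.X 0) = (Polynomial.aevalTower (Polynomial.aeval τ : AA →ₐ[ℚ] FF) u) (EE.toAlgHom (MvPolynomial.X 0))
      change _ = (Polynomial.aevalTower (Polynomial.aeval τ : AA →ₐ[ℚ] FF) u) (EE (MvPolynomial.X 0))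
      rw [show EE (MvPolynomial.X 0) = Polynomial.X from EE_X0]
      simp
    · show MvPolynomial.aeval ![u, τ] (MvPolynomial.X 1) = (Polynomial.aevalTower (Polynomial.aeval τ : AA →ₐ[ℚ] FF) u) (EE.toAlgHom (MvPolynomial.X 1))
      change _ = (Polynomial.aevalTower (Polynomial.aeval τ : AA →ₐ[ℚ] FF) u) (EE (MvPolynomial.X 1))
      rw [show EE (MvPolynomial.X 1) = Polynomial.C Polynomial.X from EE_X1]
      simp
  exact congrFun (congrArg (fun g : MP2 →ₐ[ℚ] FF => (g : MP2 → FF)) h) p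

/-- expansion of an `aevalTower` as a finite sum -/
lemma tower_eq_sum (g : AA →ₐ[ℚ] FF) (τ : FF) (b : BB) :
    Polynomial.aevalTower g τ b
      = ∑ j ∈ Finset.range (b.natDegree + 1), g (b.coeff j) * τ ^ j := by
  conv_lhs => rw [b.as_sum_range' (b.natDegree + 1) (Nat.lt_succ_self _)]
  rw [map_sum]
  refine Finset.sum_congr rfl fun j _ => ?_
  rw [← Polynomial.C_mul_X_pow_eq_monomial]
  simp


/-- **Core lemma**: clearing denominators.  If `∑ c j (xy)^j P^(d-j) = 0` with
`P` of degree exactly 2 in the outer variable, then all `c j` vanish. -/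
lemma coeff_vanish (PB : BB) (hdeg : PB.natDegree = 2) (hlc : PB.coeff 2 ≠ 0)
    (d : ℕ) (c : ℕ → AA)
    (h : ∑ j ∈ Finset.range (d + 1),
        Polynomial.C (c j) * (Polynomial.C Polynomial.X * Polynomial.X) ^ j * PB ^ (d - j) = 0) :
    ∀ j, j ≤ d → c j = 0 := by
  classical
  by_contra hcon
  push_neg at hcon
  obtain ⟨j1, hj1, hc1⟩ := hcon
  have hex : ∃ j, j ≤ d ∧ c j ≠ 0 := ⟨j1, hj1, hc1⟩
  set j0 := Nat.find hex with hj0def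
  obtain ⟨hj0d, hcj0⟩ : j0 ≤ d ∧ c j0 ≠ 0 := Nat.find_spec hex
  set N := j0 + 2 * (d - j0) with hN
  have hco := congrArg (fun q : BB => q.coeff N) h
  simp only [Polynomial.finset_sum_coeff, Polynomial.coeff_zero] at hco
  rw [Finset.sum_eq_single j0] at hco
  · -- the j0 coefficient is nonzero
    have e1 : Polynomial.C (c j0) * (Polynomial.C Polynomial.X * Polynomial.X) ^ j0
          * PB ^ (d - j0)
        = Polynomial.C (c j0 * Polynomial.X ^ j0)
            * (Polynomial.X ^ j0 * PB ^ (d - j0)) := by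
      rw [mul_pow, ← Polynomial.C_pow, map_mul]
      ring
    rw [e1, Polynomial.coeff_C_mul] at hco
    have e2 : (Polynomial.X ^ j0 * PB ^ (d - j0)).coeff N
        = (PB ^ (d - j0)).coeff (2 * (d - j0)) := by
      rw [hN, add_comm j0, Polynomial.coeff_X_pow_mul]
    rw [e2] at hco
    have e3 : (PB ^ (d - j0)).coeff (2 * (d - j0)) = (PB.coeff 2) ^ (d - j0) := by
      rw [mul_comm 2, show (2 : ℕ) = PB.natDegree from hdeg.symm,
        Polynomial.coeff_pow_mul_natDegree, Polynomial.leadingCoeff, hdeg]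
    rw [e3] at hco
    exact mul_ne_zero (mul_ne_zero hcj0 (pow_ne_zero _ Polynomial.X_ne_zero))
      (pow_ne_zero _ hlc) hco
  · intro b hb hbne
    rcases lt_or_gt_of_ne hbne with hlt | hgt
    · -- b < j0 : coefficient c b is zero by minimality
      have : ¬ (b ≤ d ∧ c b ≠ 0) := Nat.find_min hex hlt
      have hb' : b ≤ d := by
        simpa using Finset.mem_range_succ_iff.mp hb
      have : c b = 0 := by tauto
      simp [this]
    · -- b > j0 : the term has too small a degree
      apply Polynomial.coeff_eq_zero_of_natDegree_lt
      have hb' : b ≤ d := Finset.mem_range_succ_iff.mp hb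
      calc (Polynomial.C (c b) * (Polynomial.C Polynomial.X * Polynomial.X) ^ b
            * PB ^ (d - b)).natDegree
          ≤ (Polynomial.C (c b) * (Polynomial.C Polynomial.X * Polynomial.X) ^ b).natDegree
            + (PB ^ (d - b)).natDegree := Polynomial.natDegree_mul_le
        _ ≤ (Polynomial.C (c b)).natDegree
            + ((Polynomial.C Polynomial.X * Polynomial.X) ^ b).natDegree
            + (PB ^ (d - b)).natDegree := by
            exact Nat.add_le_add_right Polynomial.natDegree_mul_le _
        _ ≤ 0 + b * 1 + (d - b) * 2 := by
            refine add_le_add (add_le_add ?_ ?_) ?_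
            · simp
            · refine le_trans (Polynomial.natDegree_pow_le) ?_
              have : (Polynomial.C Polynomial.X * Polynomial.X : BB).natDegree ≤ 1 := by
                refine le_trans Polynomial.natDegree_mul_le ?_
                simp
              exact Nat.mul_le_mul_left _ this
            · refine le_trans (Polynomial.natDegree_pow_le) ?_
              rw [hdeg]
        _ < N := by omega
  · intro hj0
    exact absurd (Finset.mem_range_succ_iff.mpr hj0d) hj0

def PBf (S : Finset (Fin 3 × Fin 3)) : BB :=
  ∑ s ∈ S, Polynomial.C (Polynomial.X ^ (s.1 : ℕ)) * Polynomial.X ^ (s.2 : ℕ)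

def PBE (S : Finset (Fin 3 × Fin 3)) : BB :=
  ∑ s ∈ S, Polynomial.C (Polynomial.X ^ (s.2 : ℕ)) * Polynomial.X ^ (s.1 : ℕ)

lemma coeff_PBf (S : Finset (Fin 3 × Fin 3)) (k : ℕ) :
    (PBf S).coeff k = ∑ s ∈ S.filter (fun s => (s.2 : ℕ) = k), Polynomial.X ^ (s.1 : ℕ) := by
  classical
  rw [PBf, Polynomial.finset_sum_coeff, Finset.sum_filter]
  refine Finset.sum_congr rfl fun s _ => ?_
  rw [Polynomial.coeff_C_mul, Polynomial.coeff_X_pow]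
  rcases eq_or_ne ((s.2 : ℕ)) k with h | h
  · subst h; simp
  · rw [if_neg (fun hk => h hk.symm), if_neg h, mul_zero]

lemma coeff_PBE (S : Finset (Fin 3 × Fin 3)) (k : ℕ) :
    (PBE S).coeff k = ∑ s ∈ S.filter (fun s => (s.1 : ℕ) = k), Polynomial.X ^ (s.2 : ℕ) := by
  classical
  rw [PBE, Polynomial.finset_sum_coeff, Finset.sum_filter]
  refine Finset.sum_congr rfl fun s _ => ?_
  rw [Polynomial.coeff_C_mul, Polynomial.coeff_X_pow]
  rcases eq_or_ne ((s.1 : ℕ)) k with h | h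
  · subst h; simp
  · rw [if_neg (fun hk => h hk.symm), if_neg h, mul_zero]

lemma sum_X_pow_ne {T : Finset (Fin 3 × Fin 3)} (hT : T.Nonempty) (g : Fin 3 × Fin 3 → ℕ) :
    (∑ s ∈ T, (Polynomial.X : AA) ^ (g s)) ≠ 0 := by
  intro h0
  have h1 := congrArg (Polynomial.eval (1 : ℚ)) h0
  simp only [Polynomial.eval_finset_sum, Polynomial.eval_pow, Polynomial.eval_one,
    Polynomial.eval_X, one_pow, Finset.sum_const, nsmul_eq_mul, mul_one,
    Polynomial.eval_zero] at h1
  have : T.card = 0 := by exact_mod_cast h1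
  exact Finset.nonempty_iff_ne_empty.mp hT (Finset.card_eq_zero.mp this)

lemma fin3_coe_eq_two {a : Fin 3} : ((a : ℕ) = 2) ↔ a = 2 := by
  constructor
  · intro h; exact Fin.ext (by simpa using h)
  · intro h; simp [h]

lemma fin3_coe_eq_zero {a : Fin 3} : ((a : ℕ) = 0) ↔ a = 0 := by
  constructor
  · intro h; exact Fin.ext (by simpa using h)
  · intro h; simp [h]

lemma PBf_facts {S : Finset (Fin 3 × Fin 3)}
    (h2 : (S.filter (fun s => s.2 = 2)).Nonempty) :
    (PBf S).natDegree = 2 ∧ (PBf S).coeff 2 ≠ 0 := by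
  classical
  have hfeq : S.filter (fun s => ((s.2 : ℕ) = 2)) = S.filter (fun s => s.2 = 2) := by
    apply Finset.filter_congr
    intro s _
    simp [fin3_coe_eq_two]
  have hc2 : (PBf S).coeff 2 ≠ 0 := by
    rw [coeff_PBf, hfeq]
    exact sum_X_pow_ne h2 _
  constructor
  · refine le_antisymm ?_ (Polynomial.le_natDegree_of_ne_zero hc2)
    rw [Polynomial.natDegree_le_iff_coeff_eq_zero]
    intro k hk
    rw [coeff_PBf]
    have : S.filter (fun s => ((s.2 : ℕ) = k)) = ∅ := by
      rw [Finset.filter_eq_empty_iff]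
      intro s _
      have := s.2.isLt
      omega
    simp [this]
  · exact hc2

lemma PBE_facts {S : Finset (Fin 3 × Fin 3)}
    (h2 : (S.filter (fun s => s.1 = 2)).Nonempty) :
    (PBE S).natDegree = 2 ∧ (PBE S).coeff 2 ≠ 0 := by
  classical
  have hfeq : S.filter (fun s => ((s.1 : ℕ) = 2)) = S.filter (fun s => s.1 = 2) := by
    apply Finset.filter_congr
    intro s _
    simp [fin3_coe_eq_two]
  have hc2 : (PBE S).coeff 2 ≠ 0 := by
    rw [coeff_PBE, hfeq]
    exact sum_X_pow_ne h2 _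
  constructor
  · refine le_antisymm ?_ (Polynomial.le_natDegree_of_ne_zero hc2)
    rw [Polynomial.natDegree_le_iff_coeff_eq_zero]
    intro k hk
    rw [coeff_PBE]
    have : S.filter (fun s => ((s.1 : ℕ) = k)) = ∅ := by
      rw [Finset.filter_eq_empty_iff]
      intro s _
      have := s.1.isLt
      omega
    simp [this]
  · exact hc2


lemma B_indep (β : BB →+* FF) (hβ : Function.Injective β) (PB : BB)
    (hdeg : PB.natDegree = 2) (hlc : PB.coeff 2 ≠ 0) (τ : FF)
    (hτm : τ * β PB = β (Polynomial.C Polynomial.X * Polynomial.X))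
    (b : BB)
    (hb : ∑ j ∈ Finset.range (b.natDegree + 1), β (Polynomial.C (b.coeff j)) * τ ^ j = 0) :
    b = 0 := by
  set d := b.natDegree with hd
  have key : ∀ j, j ≤ d → τ ^ j * (β PB) ^ d
      = β ((Polynomial.C Polynomial.X * Polynomial.X) ^ j * PB ^ (d - j)) := by
    intro j hj
    have e1 : (β PB) ^ d = (β PB) ^ j * (β PB) ^ (d - j) := by
      rw [← pow_add]; congr 1; omega
    calc τ ^ j * (β PB) ^ d = (τ * β PB) ^ j * (β PB) ^ (d - j) := by
          rw [e1, mul_pow]; ring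
      _ = β ((Polynomial.C Polynomial.X * Polynomial.X) ^ j * PB ^ (d - j)) := by
          rw [hτm, ← map_pow, ← map_pow, ← map_mul]
  have h0 : β (∑ j ∈ Finset.range (d + 1),
      Polynomial.C (b.coeff j) * (Polynomial.C Polynomial.X * Polynomial.X) ^ j
        * PB ^ (d - j)) = 0 := by
    rw [map_sum]
    have e2 : ∀ j ∈ Finset.range (d + 1),
        β (Polynomial.C (b.coeff j) * (Polynomial.C Polynomial.X * Polynomial.X) ^ j
          * PB ^ (d - j))
        = (β (Polynomial.C (b.coeff j)) * τ ^ j) * (β PB) ^ d := by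
      intro j hj
      rw [mul_assoc, map_mul, ← key j (Finset.mem_range_succ_iff.mp hj)]
      ring
    rw [Finset.sum_congr rfl e2, ← Finset.sum_mul, hb, zero_mul]
  have hsum0 : (∑ j ∈ Finset.range (d + 1),
      Polynomial.C (b.coeff j) * (Polynomial.C Polynomial.X * Polynomial.X) ^ j
        * PB ^ (d - j)) = 0 := by
    apply hβ
    rw [h0, map_zero]
  have hvan := coeff_vanish PB hdeg hlc d b.coeff hsum0
  refine Polynomial.ext fun j => ?_
  rcases le_or_gt j d with hj | hj
  · simpa using hvan j hj
  · have : b.natDegree < j := by omega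
    simpa using Polynomial.coeff_eq_zero_of_natDegree_lt this

lemma evx_injective (S : Finset (Fin 3 × Fin 3)) (τ : FF)
    (h2 : (S.filter (fun s => s.2 = 2)).Nonempty)
    (hτm : τ * βf (PBf S) = xx * yy) :
    ∀ p : MP2, MvPolynomial.aeval ![xx, τ] p = 0 → p = 0 := by
  intro p hp
  rw [aeval_eq_tower_Ef, tower_eq_sum] at hp
  obtain ⟨hdeg, hlc⟩ := PBf_facts h2
  have hp' : ∑ j ∈ Finset.range ((Ef p).natDegree + 1),
      βf (Polynomial.C ((Ef p).coeff j)) * τ ^ j = 0 := by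
    rw [← hp]
    exact Finset.sum_congr rfl fun j _ => by rw [βf_C]
  have hτm' : τ * βf (PBf S) = βf (Polynomial.C Polynomial.X * Polynomial.X) := by
    rw [map_mul, βf_C, βf_X, hτm]
    simp
  have hz := B_indep βf βf_inj (PBf S) hdeg hlc τ hτm' (Ef p) hp'
  have : Ef p = Ef 0 := by rw [hz, map_zero]
  exact Ef.injective this

lemma evy_injective (S : Finset (Fin 3 × Fin 3)) (τ : FF)
    (h2 : (S.filter (fun s => s.1 = 2)).Nonempty)
    (hτm : τ * βE (PBE S) = xx * yy) :
    ∀ p : MP2, MvPolynomial.aeval ![yy, τ] p = 0 → p = 0 := by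
  intro p hp
  rw [aeval_eq_tower_Ef, tower_eq_sum] at hp
  obtain ⟨hdeg, hlc⟩ := PBE_facts h2
  have hp' : ∑ j ∈ Finset.range ((Ef p).natDegree + 1),
      βE (Polynomial.C ((Ef p).coeff j)) * τ ^ j = 0 := by
    rw [← hp]
    exact Finset.sum_congr rfl fun j _ => by rw [βE_C]
  have hτm' : τ * βE (PBE S) = βE (Polynomial.C Polynomial.X * Polynomial.X) := by
    rw [map_mul, βE_C, βE_X, hτm]
    simp
    ring
  have hz := B_indep βE βE_inj (PBE S) hdeg hlc τ hτm' (Ef p) hp'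
  have : Ef p = Ef 0 := by rw [hz, map_zero]
  exact Ef.injective this

/-- images of the `P` polynomials in `FF` -/
lemma βf_PBf (S : Finset (Fin 3 × Fin 3)) :
    βf (PBf S) = ∑ s ∈ S, xx ^ (s.1 : ℕ) * yy ^ (s.2 : ℕ) := by
  rw [PBf, map_sum]
  refine Finset.sum_congr rfl fun s _ => ?_
  simp only [map_mul, map_pow, βf_CX, βf_X]

lemma βE_PBE (S : Finset (Fin 3 × Fin 3)) :
    βE (PBE S) = ∑ s ∈ S, xx ^ (s.1 : ℕ) * yy ^ (s.2 : ℕ) := by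
  rw [PBE, map_sum]
  refine Finset.sum_congr rfl fun s _ => ?_
  simp only [map_mul, map_pow, βE_CX, βE_X]
  ring


lemma group_first (S : Finset (Fin 3 × Fin 3)) (u w : FF) :
    ∑ s ∈ S, u ^ (s.1 : ℕ) * w ^ (s.2 : ℕ)
      = (∑ s ∈ S.filter (fun s => s.1 = 0), w ^ (s.2 : ℕ))
        + (∑ s ∈ S.filter (fun s => s.1 = 1), w ^ (s.2 : ℕ)) * u
        + (∑ s ∈ S.filter (fun s => s.1 = 2), w ^ (s.2 : ℕ)) * u ^ 2 := by
  classical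
  rw [← Finset.sum_fiberwise S (fun s => s.1) (fun s => u ^ (s.1 : ℕ) * w ^ (s.2 : ℕ)),
    Fin.sum_univ_three]
  congr 1
  · congr 1
    · refine (Finset.sum_congr rfl fun s hs => ?_)
      have h0 : s.1 = 0 := (Finset.mem_filter.mp hs).2
      rw [h0]
      norm_num
    · rw [Finset.sum_mul]
      refine (Finset.sum_congr rfl fun s hs => ?_)
      have h0 : s.1 = 1 := (Finset.mem_filter.mp hs).2
      rw [h0]
      norm_num
      ring
  · rw [Finset.sum_mul]
    refine (Finset.sum_congr rfl fun s hs => ?_)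
    have h0 : s.1 = 2 := (Finset.mem_filter.mp hs).2
    rw [h0]
    norm_num
    ring

lemma group_second (S : Finset (Fin 3 × Fin 3)) (u w : FF) :
    ∑ s ∈ S, w ^ (s.1 : ℕ) * u ^ (s.2 : ℕ)
      = (∑ s ∈ S.filter (fun s => s.2 = 0), w ^ (s.1 : ℕ))
        + (∑ s ∈ S.filter (fun s => s.2 = 1), w ^ (s.1 : ℕ)) * u
        + (∑ s ∈ S.filter (fun s => s.2 = 2), w ^ (s.1 : ℕ)) * u ^ 2 := by
  classical
  rw [← Finset.sum_fiberwise S (fun s => s.2) (fun s => w ^ (s.1 : ℕ) * u ^ (s.2 : ℕ)),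
    Fin.sum_univ_three]
  congr 1
  · congr 1
    · refine (Finset.sum_congr rfl fun s hs => ?_)
      have h0 : s.2 = 0 := (Finset.mem_filter.mp hs).2
      rw [h0]
      norm_num
    · rw [Finset.sum_mul]
      refine (Finset.sum_congr rfl fun s hs => ?_)
      have h0 : s.2 = 1 := (Finset.mem_filter.mp hs).2
      rw [h0]
      norm_num
  · rw [Finset.sum_mul]
    refine (Finset.sum_congr rfl fun s hs => ?_)
    have h0 : s.2 = 2 := (Finset.mem_filter.mp hs).2
    rw [h0]
    norm_num

lemma tau_calc (c b a u w : FF) (hc : c ≠ 0) (ha : a ≠ 0) (hu : u ≠ 0)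
    (hPne : c + b * u + a * u ^ 2 ≠ 0) :
    ((c / (a * u)) * w) / (c + b * (c / (a * u)) + a * (c / (a * u)) ^ 2)
      = (u * w) / (c + b * u + a * u ^ 2) := by
  have e : c + b * (c / (a * u)) + a * (c / (a * u)) ^ 2
      = c * (c + b * u + a * u ^ 2) / (a * u ^ 2) := by
    field_simp
    ring
  rw [e]
  rw [div_div_eq_mul_div, div_mul_eq_mul_div, div_mul_eq_mul_div, div_div]
  rw [div_eq_div_iff (mul_ne_zero (mul_ne_zero ha hu)
      (mul_ne_zero hc hPne)) hPne]
  ring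


lemma algebraMap_mem_subfield (T : Subfield FF) (hx : xx ∈ T) (hy : yy ∈ T) (p : MP2) :
    algebraMap MP2 FF p ∈ T := by
  induction p using MvPolynomial.induction_on with
  | C r =>
      rw [algebraMap_C, eq_ratCast (algebraMap ℚ FF) r]
      exact SubfieldClass.ratCast_mem T r
  | add p q hp hq => rw [map_add]; exact add_mem hp hq
  | mul_X p i hp =>
      rw [map_mul]
      refine mul_mem hp ?_
      fin_cases i
      · exact hx
      · exact hy

lemma subfield_eq_top (T : Subfield FF) (hx : xx ∈ T) (hy : yy ∈ T) (z : FF) : z ∈ T := by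
  obtain ⟨p, q, _, rfl⟩ := IsFractionRing.div_surjective (A := MP2) z
  exact div_mem (algebraMap_mem_subfield T hx hy p) (algebraMap_mem_subfield T hx hy q)

lemma equiv_fix_aeval (σ : FF ≃+* FF) (u v : FF) (hu : σ u = u) (hv : σ v = v) (p : MP2) :
    σ (MvPolynomial.aeval ![u, v] p) = MvPolynomial.aeval ![u, v] p := by
  induction p using MvPolynomial.induction_on with
  | C r =>
      rw [MvPolynomial.aeval_C, eq_ratCast (algebraMap ℚ FF) r]
      exact map_ratCast σ r
  | add p q hp hq => rw [map_add, map_add, hp, hq]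
  | mul_X p i hp =>
      rw [map_mul, map_mul, hp]
      congr 1
      fin_cases i
      · simpa using hu
      · simpa using hv

/-- the constant embedding `ℚ[t] → ℚ[x̲,t̲]`, `t ↦ X 1`, through `EE`. -/
lemma EE_aeval_X1 (a : AA) :
    EE (Polynomial.aeval (MvPolynomial.X 1 : MP2) a) = Polynomial.C a := by
  have h : (EE : MP2 →+* BB).comp
        ((Polynomial.aeval (MvPolynomial.X 1 : MP2) : AA →ₐ[ℚ] MP2) : AA →+* MP2)
      = (Polynomial.C : AA →+* BB) := by
    apply Polynomial.ringHom_ext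
    · intro r
      simp only [RingHom.comp_apply, RingHom.coe_coe, Polynomial.aeval_C]
      have : algebraMap ℚ MP2 r = MvPolynomial.C r := rfl
      rw [this, EE_C]
    · simp only [RingHom.comp_apply, RingHom.coe_coe, Polynomial.aeval_X]
      exact EE_X1
  exact congrFun (congrArg (fun g : AA →+* BB => (g : AA → BB)) h) a

/-- the same through `Ef` : it is `map C`, hence injective. -/
lemma Ef_aeval_X1 (a : AA) :
    Ef (Polynomial.aeval (MvPolynomial.X 1 : MP2) a) = a.map (Polynomial.C : ℚ →+* AA) := by
  have h : (Ef : MP2 →+* BB).comp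
        ((Polynomial.aeval (MvPolynomial.X 1 : MP2) : AA →ₐ[ℚ] MP2) : AA →+* MP2)
      = Polynomial.mapRingHom (Polynomial.C : ℚ →+* AA) := by
    apply Polynomial.ringHom_ext
    · intro r
      simp only [RingHom.comp_apply, RingHom.coe_coe, Polynomial.aeval_C,
        Polynomial.coe_mapRingHom, Polynomial.map_C]
      have : algebraMap ℚ MP2 r = MvPolynomial.C r := rfl
      rw [this, Ef_C]
    · simp only [RingHom.comp_apply, RingHom.coe_coe, Polynomial.aeval_X,
        Polynomial.coe_mapRingHom, Polynomial.map_X]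
      exact Ef_X1
  exact congrFun (congrArg (fun g : AA →+* BB => (g : AA → BB)) h) a

/-- transcendence of `τ` over `ℚ`, given injectivity of evaluation at `(x, τ)`. -/
lemma tau_transcendental (τ : FF)
    (hinj : ∀ p : MP2, MvPolynomial.aeval ![xx, τ] p = 0 → p = 0)
    (a : AA) (ha : Polynomial.aeval τ a = 0) : a = 0 := by
  have h1 : MvPolynomial.aeval ![xx, τ] (Polynomial.aeval (MvPolynomial.X 1 : MP2) a)
      = Polynomial.aeval τ a := by
    rw [← Polynomial.aeval_algHom_apply]
    congr 1
    simp
  have h2 := hinj _ (h1.trans ha)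
  have h3 := congrArg Ef h2
  rw [Ef_aeval_X1, map_zero] at h3
  exact Polynomial.map_injective _ (Polynomial.C_injective) (by simpa using h3)


lemma rational_in_t (nI dI : MP2) (n2 d2 : AA)
    (h : ∀ j, (EE nI).coeff j * d2 = n2 * (EE dI).coeff j) :
    nI * Polynomial.aeval (MvPolynomial.X 1 : MP2) d2
      = Polynomial.aeval (MvPolynomial.X 1 : MP2) n2 * dI := by
  apply EE.injective
  rw [map_mul, map_mul, EE_aeval_X1, EE_aeval_X1]
  refine Polynomial.ext fun j => ?_
  rw [Polynomial.coeff_mul_C, Polynomial.coeff_C_mul]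
  exact h j

lemma map_filtered_sum_y (T : Finset (Fin 3 × Fin 3)) :
    algebraMap MP2 FF (∑ s ∈ T, (MvPolynomial.X 1 : MP2) ^ ((s.2 : ℕ)))
      = ∑ s ∈ T, yy ^ (s.2 : ℕ) := by
  rw [map_sum]
  exact Finset.sum_congr rfl fun s _ => by rw [map_pow]; rfl

lemma map_filtered_sum_x (T : Finset (Fin 3 × Fin 3)) :
    algebraMap MP2 FF (∑ s ∈ T, (MvPolynomial.X 0 : MP2) ^ ((s.1 : ℕ)))
      = ∑ s ∈ T, xx ^ (s.1 : ℕ) := by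
  rw [map_sum]
  exact Finset.sum_congr rfl fun s _ => by rw [map_pow]; rfl

end NRI
end NRIaux


set_option maxHeartbeats 2000000 in
set_option synthInstance.maxHeartbeats 1000000 in
/-- **Infinite group ⟹ no rational invariants.**
The group of a quadrant model `S` is generated by the two birational (here: field
automorphism) transformations `φ : x ↦ c̃(y)/(ã(y)·x)` and `ψ : y ↦ c(x)/(a(x)·y)` of
`ℚ(x,y)`, where (in shifted coordinates, `(p,q) ∈ S ⊆ {0,1,2}²` encoding the step
`(p-1,q-1)`) `c̃(y) = Σ_{(0,q)∈S} yᑫ`, `ã(y) = Σ_{(2,q)∈S} yᑫ`, and similarly for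
`c, a`.  If this group is infinite, then the model admits no rational invariants:
there exist no `I(x) ∈ ℚ(x,t) \ ℚ(t)` and `J(y) ∈ ℚ(y,t)` such that the kernel
`K(x,y) = t·Σ_{(p,q)∈S} xᵖyᑫ - xy` divides the numerator of `I(x) - J(y)`.
(In the conclusion, `I = nI/dI`, `J = nJ/dJ`, and `![0,2]`, `![1,2]` embed the
variable pairs `(x,t)` and `(y,t)` into the three variables `(x,y,t)`.) -/
theorem infinite_group_no_rational_invariants (S : Finset (Fin 3 × Fin 3))
    (φ ψ : FractionRing (MvPolynomial (Fin 2) ℚ) ≃+* FractionRing (MvPolynomial (Fin 2) ℚ))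
    (hφx : φ (algebraMap (MvPolynomial (Fin 2) ℚ) _ (X 0)) =
      algebraMap (MvPolynomial (Fin 2) ℚ) _
          (∑ s ∈ S.filter (fun s => s.1 = 0), (X 1) ^ (s.2 : ℕ)) /
        (algebraMap (MvPolynomial (Fin 2) ℚ) _
            (∑ s ∈ S.filter (fun s => s.1 = 2), (X 1) ^ (s.2 : ℕ)) *
          algebraMap (MvPolynomial (Fin 2) ℚ) _ (X 0)))
    (hφy : φ (algebraMap (MvPolynomial (Fin 2) ℚ) _ (X 1)) =
      algebraMap (MvPolynomial (Fin 2) ℚ) _ (X 1))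
    (hψy : ψ (algebraMap (MvPolynomial (Fin 2) ℚ) _ (X 1)) =
      algebraMap (MvPolynomial (Fin 2) ℚ) _
          (∑ s ∈ S.filter (fun s => s.2 = 0), (X 0) ^ (s.1 : ℕ)) /
        (algebraMap (MvPolynomial (Fin 2) ℚ) _
            (∑ s ∈ S.filter (fun s => s.2 = 2), (X 0) ^ (s.1 : ℕ)) *
          algebraMap (MvPolynomial (Fin 2) ℚ) _ (X 1)))
    (hψx : ψ (algebraMap (MvPolynomial (Fin 2) ℚ) _ (X 0)) =
      algebraMap (MvPolynomial (Fin 2) ℚ) _ (X 0))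
    (hinf : Set.Infinite
      (SetLike.coe (Subgroup.closure ({φ, ψ} :
          Set (FractionRing (MvPolynomial (Fin 2) ℚ) ≃+*
            FractionRing (MvPolynomial (Fin 2) ℚ)))))) :
    ¬ ∃ nI dI nJ dJ : MvPolynomial (Fin 2) ℚ,
        dI ≠ 0 ∧ dJ ≠ 0 ∧
        (¬ ∃ n2 d2 : Polynomial ℚ, d2 ≠ 0 ∧
            nI * Polynomial.aeval (X 1 : MvPolynomial (Fin 2) ℚ) d2
              = Polynomial.aeval (X 1 : MvPolynomial (Fin 2) ℚ) n2 * dI) ∧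
        ((X 2 : MvPolynomial (Fin 3) ℚ) *
            (∑ s ∈ S, (X 0 : MvPolynomial (Fin 3) ℚ) ^ (s.1 : ℕ) * (X 1) ^ (s.2 : ℕ))
          - X 0 * X 1) ∣
          (rename ![0, 2] nI * rename ![1, 2] dJ - rename ![1, 2] nJ * rename ![0, 2] dI) := by
  classical
  rintro ⟨nI, dI, nJ, dJ, hdI, hdJ, hInotT, hdvd⟩
  -- Step 1 : the two basic variables and the coefficient sums
  have hφy' : φ NRI.yy = NRI.yy := hφy
  have hψx' : ψ NRI.xx = NRI.xx := hψx
  have hφx' : φ NRI.xx = (∑ s ∈ S.filter (fun s => s.1 = 0), NRI.yy ^ (s.2 : ℕ)) /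
      ((∑ s ∈ S.filter (fun s => s.1 = 2), NRI.yy ^ (s.2 : ℕ)) * NRI.xx) := by
    show φ ((algebraMap NRI.MP2 NRI.FF) (MvPolynomial.X 0)) = _
    rw [hφx, NRI.map_filtered_sum_y, NRI.map_filtered_sum_y]
    rfl
  have hψy' : ψ NRI.yy = (∑ s ∈ S.filter (fun s => s.2 = 0), NRI.xx ^ (s.1 : ℕ)) /
      ((∑ s ∈ S.filter (fun s => s.2 = 2), NRI.xx ^ (s.1 : ℕ)) * NRI.yy) := by
    show ψ ((algebraMap NRI.MP2 NRI.FF) (MvPolynomial.X 1)) = _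
    rw [hψy, NRI.map_filtered_sum_x, NRI.map_filtered_sum_x]
    rfl
  -- names for the six coefficient sums
  have hφxne : φ NRI.xx ≠ 0 := fun h =>
    NRI.xx_ne (φ.injective (by rw [h, map_zero]))
  have hψyne : ψ NRI.yy ≠ 0 := fun h =>
    NRI.yy_ne (ψ.injective (by rw [h, map_zero]))
  have hct : (∑ s ∈ S.filter (fun s => s.1 = 0), NRI.yy ^ (s.2 : ℕ)) ≠ 0 := by
    intro h
    apply hφxne
    rw [hφx', h, zero_div]
  have hat : (∑ s ∈ S.filter (fun s => s.1 = 2), NRI.yy ^ (s.2 : ℕ)) ≠ 0 := by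
    intro h
    apply hφxne
    rw [hφx', h, zero_mul, div_zero]
  have hcs : (∑ s ∈ S.filter (fun s => s.2 = 0), NRI.xx ^ (s.1 : ℕ)) ≠ 0 := by
    intro h
    apply hψyne
    rw [hψy', h, zero_div]
  have has : (∑ s ∈ S.filter (fun s => s.2 = 2), NRI.xx ^ (s.1 : ℕ)) ≠ 0 := by
    intro h
    apply hψyne
    rw [hψy', h, zero_mul, div_zero]
  -- Step 2 : the corresponding filters are nonempty
  have hne1 : (S.filter (fun s => s.1 = 2)).Nonempty := by
    rw [Finset.nonempty_iff_ne_empty]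
    intro h
    exact hat (by rw [h, Finset.sum_empty])
  have hne2 : (S.filter (fun s => s.2 = 2)).Nonempty := by
    rw [Finset.nonempty_iff_ne_empty]
    intro h
    exact has (by rw [h, Finset.sum_empty])
  -- Step 3 : the kernel sum and τ
  set PF : NRI.FF := ∑ s ∈ S, NRI.xx ^ (s.1 : ℕ) * NRI.yy ^ (s.2 : ℕ) with hPFdef
  have hPFf : NRI.βf (NRI.PBf S) = PF := NRI.βf_PBf S
  have hPFE : NRI.βE (NRI.PBE S) = PF := NRI.βE_PBE S
  have hPF : PF ≠ 0 := by
    rw [← hPFf]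
    intro h
    have : NRI.PBf S = 0 := NRI.βf_inj (by rw [h, map_zero])
    exact (NRI.PBf_facts hne2).2 (by rw [this, Polynomial.coeff_zero])
  set τ : NRI.FF := NRI.xx * NRI.yy / PF with hτdef
  have hτP : τ * PF = NRI.xx * NRI.yy := div_mul_cancel₀ _ hPF
  have hτne : τ ≠ 0 := by
    rw [hτdef]
    exact div_ne_zero (mul_ne_zero NRI.xx_ne NRI.yy_ne) hPF
  have hPF1 : PF = (∑ s ∈ S.filter (fun s => s.1 = 0), NRI.yy ^ (s.2 : ℕ))
      + (∑ s ∈ S.filter (fun s => s.1 = 1), NRI.yy ^ (s.2 : ℕ)) * NRI.xx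
      + (∑ s ∈ S.filter (fun s => s.1 = 2), NRI.yy ^ (s.2 : ℕ)) * NRI.xx ^ 2 :=
    NRI.group_first S NRI.xx NRI.yy
  have hPF2 : PF = (∑ s ∈ S.filter (fun s => s.2 = 0), NRI.xx ^ (s.1 : ℕ))
      + (∑ s ∈ S.filter (fun s => s.2 = 1), NRI.xx ^ (s.1 : ℕ)) * NRI.yy
      + (∑ s ∈ S.filter (fun s => s.2 = 2), NRI.xx ^ (s.1 : ℕ)) * NRI.yy ^ 2 :=
    NRI.group_second S NRI.yy NRI.xx
  -- Step 4 : τ is fixed by φ and ψ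
  have hφτ : φ τ = τ := by
    have hφPF : φ PF = (∑ s ∈ S.filter (fun s => s.1 = 0), NRI.yy ^ (s.2 : ℕ))
        + (∑ s ∈ S.filter (fun s => s.1 = 1), NRI.yy ^ (s.2 : ℕ)) * (φ NRI.xx)
        + (∑ s ∈ S.filter (fun s => s.1 = 2), NRI.yy ^ (s.2 : ℕ)) * (φ NRI.xx) ^ 2 := by
      rw [hPFdef, map_sum]
      rw [Finset.sum_congr rfl (fun s _ => by
        rw [map_mul, map_pow, map_pow, hφy'] :
        ∀ s ∈ S, φ (NRI.xx ^ (s.1 : ℕ) * NRI.yy ^ (s.2 : ℕ))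
          = (φ NRI.xx) ^ (s.1 : ℕ) * NRI.yy ^ (s.2 : ℕ))]
      exact NRI.group_first S (φ NRI.xx) NRI.yy
    have h1 : φ τ = (φ NRI.xx * NRI.yy) / φ PF := by
      rw [hτdef, map_div₀, map_mul, hφy']
    rw [h1, hφPF, hφx',
      NRI.tau_calc _ _ _ NRI.xx NRI.yy hct hat NRI.xx_ne (by rw [← hPF1]; exact hPF),
      hτdef, ← hPF1]
  have hψτ : ψ τ = τ := by
    have hψPF : ψ PF = (∑ s ∈ S.filter (fun s => s.2 = 0), NRI.xx ^ (s.1 : ℕ))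
        + (∑ s ∈ S.filter (fun s => s.2 = 1), NRI.xx ^ (s.1 : ℕ)) * (ψ NRI.yy)
        + (∑ s ∈ S.filter (fun s => s.2 = 2), NRI.xx ^ (s.1 : ℕ)) * (ψ NRI.yy) ^ 2 := by
      rw [hPFdef, map_sum]
      rw [Finset.sum_congr rfl (fun s _ => by
        rw [map_mul, map_pow, map_pow, hψx'] :
        ∀ s ∈ S, ψ (NRI.xx ^ (s.1 : ℕ) * NRI.yy ^ (s.2 : ℕ))
          = NRI.xx ^ (s.1 : ℕ) * (ψ NRI.yy) ^ (s.2 : ℕ))]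
      exact NRI.group_second S (ψ NRI.yy) NRI.xx
    have h1 : ψ τ = (ψ NRI.yy * NRI.xx) / ψ PF := by
      rw [hτdef, map_div₀, map_mul, hψx', mul_comm]
    rw [h1, hψPF, hψy',
      NRI.tau_calc _ _ _ NRI.yy NRI.xx hcs has NRI.yy_ne (by rw [← hPF2]; exact hPF),
      hτdef, ← hPF2, mul_comm NRI.yy NRI.xx]
  -- Step 5 : injectivity of the two evaluations
  have hevx : ∀ p : NRI.MP2, MvPolynomial.aeval ![NRI.xx, τ] p = 0 → p = 0 :=
    NRI.evx_injective S τ hne2 (by rw [hPFf]; exact hτP)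
  have hevy : ∀ p : NRI.MP2, MvPolynomial.aeval ![NRI.yy, τ] p = 0 → p = 0 :=
    NRI.evy_injective S τ hne1 (by rw [hPFE]; exact hτP)
  -- Step 6 : the divisibility gives the invariant identity on the kernel
  have hstar : MvPolynomial.aeval ![NRI.xx, τ] nI * MvPolynomial.aeval ![NRI.yy, τ] dJ
      = MvPolynomial.aeval ![NRI.yy, τ] nJ * MvPolynomial.aeval ![NRI.xx, τ] dI := by
    obtain ⟨c0, hc0⟩ := hdvd
    have hcomp1 : (![NRI.xx, NRI.yy, τ] ∘ ![0, 2] : Fin 2 → NRI.FF) = ![NRI.xx, τ] := by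
      funext i; fin_cases i <;> rfl
    have hcomp2 : (![NRI.xx, NRI.yy, τ] ∘ ![1, 2] : Fin 2 → NRI.FF) = ![NRI.yy, τ] := by
      funext i; fin_cases i <;> rfl
    have hK0 : MvPolynomial.aeval ![NRI.xx, NRI.yy, τ]
        ((X 2 : MvPolynomial (Fin 3) ℚ) *
            (∑ s ∈ S, (X 0 : MvPolynomial (Fin 3) ℚ) ^ (s.1 : ℕ) * (X 1) ^ (s.2 : ℕ))
          - X 0 * X 1) = 0 := by
      rw [map_sub, map_mul, map_mul, map_sum]
      simp only [MvPolynomial.aeval_X, Matrix.cons_val_zero, Matrix.cons_val_one,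
        Matrix.head_cons, Matrix.cons_val_two, Matrix.tail_cons, map_mul, map_pow]
      rw [← hPFdef, hτP, sub_self]
    have happ := congrArg (MvPolynomial.aeval ![NRI.xx, NRI.yy, τ]) hc0
    rw [map_mul, hK0, zero_mul, map_sub, map_mul, map_mul,
      MvPolynomial.aeval_rename, MvPolynomial.aeval_rename, MvPolynomial.aeval_rename,
      MvPolynomial.aeval_rename, hcomp1, hcomp2] at happ
    exact sub_eq_zero.mp happ
  have hdIne : MvPolynomial.aeval ![NRI.xx, τ] dI ≠ 0 := fun h => hdI (hevx dI h)
  have hdJne : MvPolynomial.aeval ![NRI.yy, τ] dJ ≠ 0 := fun h => hdJ (hevy dJ h)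
  -- Step 7 : the invariant
  set I : NRI.FF := MvPolynomial.aeval ![NRI.xx, τ] nI / MvPolynomial.aeval ![NRI.xx, τ] dI
    with hIdef
  have hIJ : I = MvPolynomial.aeval ![NRI.yy, τ] nJ / MvPolynomial.aeval ![NRI.yy, τ] dJ := by
    rw [hIdef, div_eq_div_iff hdIne hdJne]
    exact hstar
  have hψI : ψ I = I := by
    rw [hIdef, map_div₀, NRI.equiv_fix_aeval ψ NRI.xx τ hψx' hψτ,
      NRI.equiv_fix_aeval ψ NRI.xx τ hψx' hψτ]
  have hφI : φ I = I := by
    rw [hIJ, map_div₀, NRI.equiv_fix_aeval φ NRI.yy τ hφy' hφτ,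
      NRI.equiv_fix_aeval φ NRI.yy τ hφy' hφτ]
  -- Step 8 : every element of the group fixes τ and I
  have hGfix : ∀ g ∈ Subgroup.closure ({φ, ψ} :
      Set (NRI.FF ≃+* NRI.FF)), g τ = τ ∧ g I = I := by
    intro g hg
    induction hg using Subgroup.closure_induction with
    | mem g hg =>
        rcases hg with h | h
        · subst h; exact ⟨hφτ, hφI⟩
        · rw [Set.mem_singleton_iff] at h; subst h; exact ⟨hψτ, hψI⟩
    | one => exact ⟨rfl, rfl⟩
    | mul g h _ _ hgf hhf =>
        constructor
        · show g (h τ) = τ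
          rw [hhf.1, hgf.1]
        · show g (h I) = I
          rw [hhf.2, hgf.2]
    | inv g _ hgf =>
        constructor
        · show g.symm τ = τ
          conv_lhs => rw [← hgf.1]
          exact g.symm_apply_apply τ
        · show g.symm I = I
          conv_lhs => rw [← hgf.2]
          exact g.symm_apply_apply I
  -- Step 9 : the fixed field
  set K : IntermediateField ℚ NRI.FF := IntermediateField.adjoin ℚ {τ, I} with hKdef
  have hτK : τ ∈ K := IntermediateField.subset_adjoin ℚ _ (by simp)
  have hIK : I ∈ K := IntermediateField.subset_adjoin ℚ _ (by simp)
  have hKfix : ∀ g ∈ Subgroup.closure ({φ, ψ} : Set (NRI.FF ≃+* NRI.FF)),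
      ∀ z ∈ K, g z = z := by
    intro g hg z hz
    obtain ⟨hgτ, hgI⟩ := hGfix g hg
    induction hz using IntermediateField.adjoin_induction with
    | mem w hw =>
        rcases hw with h | h
        · subst h; exact hgτ
        · rw [Set.mem_singleton_iff] at h; subst h; exact hgI
    | algebraMap r =>
        rw [eq_ratCast (algebraMap ℚ NRI.FF) r]
        exact map_ratCast g r
    | add u v _ _ hu hv => rw [map_add, hu, hv]
    | inv u _ hu => rw [map_inv₀, hu]
    | mul u v _ _ hu hv => rw [map_mul, hu, hv]
  -- Step 10 : x is integral over K
  have hxint : IsIntegral K NRI.xx := by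
    have hτtr := NRI.tau_transcendental τ hevx
    have hθ : ∀ a : NRI.AA, (algebraMap K NRI.FF)
        (Polynomial.aeval (⟨τ, hτK⟩ : K) a) = Polynomial.aeval τ a := by
      intro a
      exact (Polynomial.aeval_algHom_apply (IsScalarTower.toAlgHom ℚ K NRI.FF) ⟨τ, hτK⟩ a).symm
    set θ : NRI.AA →+* K := (Polynomial.aeval (⟨τ, hτK⟩ : K) : NRI.AA →ₐ[ℚ] K).toRingHom
      with hθdef
    set Q : Polynomial K := ((NRI.EE nI).map θ)
        - Polynomial.C (⟨I, hIK⟩ : K) * ((NRI.EE dI).map θ) with hQdef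
    have hmapev : ∀ b : NRI.BB, Polynomial.aeval NRI.xx (b.map θ)
        = ∑ j ∈ Finset.range (b.natDegree + 1),
            Polynomial.aeval τ (b.coeff j) * NRI.xx ^ j := by
      intro b
      rw [Polynomial.aeval_def, Polynomial.eval₂_map, Polynomial.eval₂_eq_sum_range]
      refine Finset.sum_congr rfl fun j _ => ?_
      rw [RingHom.comp_apply]
      congr 1
      exact hθ _
    have hex : ∀ p : NRI.MP2, MvPolynomial.aeval ![NRI.xx, τ] p
        = ∑ j ∈ Finset.range ((NRI.EE p).natDegree + 1),
            Polynomial.aeval τ ((NRI.EE p).coeff j) * NRI.xx ^ j := by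
      intro p
      rw [NRI.aeval_eq_tower_EE NRI.xx τ p, NRI.tower_eq_sum]
    have hQev : Polynomial.aeval NRI.xx Q = 0 := by
      rw [hQdef, map_sub, map_mul, hmapev, hmapev, Polynomial.aeval_C, ← hex, ← hex]
      have hIKc : (algebraMap K NRI.FF) (⟨I, hIK⟩ : K) = I := rfl
      rw [hIKc, hIdef, div_mul_cancel₀ _ hdIne, sub_self]
    have hQne : Q ≠ 0 := by
      intro hQ0
      rw [hQdef, sub_eq_zero] at hQ0
      have hco : ∀ j, Polynomial.aeval τ ((NRI.EE nI).coeff j)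
          = I * Polynomial.aeval τ ((NRI.EE dI).coeff j) := by
        intro j
        have h1 := congrArg (fun q : Polynomial K => (algebraMap K NRI.FF) (q.coeff j)) hQ0
        simp only [Polynomial.coeff_map, Polynomial.coeff_C_mul, map_mul] at h1
        rw [hθdef] at h1
        simp only [AlgHom.toRingHom_eq_coe, RingHom.coe_coe] at h1
        rw [hθ, hθ] at h1
        exact h1
      have hdbne : NRI.EE dI ≠ 0 := fun h => hdI (by
        apply NRI.EE.injective
        rw [h, map_zero])
      have hdj0 : (NRI.EE dI).coeff (NRI.EE dI).natDegree ≠ 0 :=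
        Polynomial.leadingCoeff_ne_zero.mpr hdbne
      have hcross : ∀ j, (NRI.EE nI).coeff j * (NRI.EE dI).coeff (NRI.EE dI).natDegree
          = (NRI.EE nI).coeff (NRI.EE dI).natDegree * (NRI.EE dI).coeff j := by
        intro j
        have h2 : Polynomial.aeval τ
            ((NRI.EE nI).coeff j * (NRI.EE dI).coeff (NRI.EE dI).natDegree
              - (NRI.EE nI).coeff (NRI.EE dI).natDegree * (NRI.EE dI).coeff j) = 0 := by
          rw [map_sub, map_mul, map_mul, hco j, hco ((NRI.EE dI).natDegree)]
          ring
        exact sub_eq_zero.mp (hτtr _ h2)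
      exact hInotT ⟨(NRI.EE nI).coeff (NRI.EE dI).natDegree,
        (NRI.EE dI).coeff (NRI.EE dI).natDegree, hdj0,
        NRI.rational_in_t nI dI _ _ hcross⟩
    exact IsAlgebraic.isIntegral ⟨Q, hQne, hQev⟩
  -- Step 11 : finite dimensionality of FF over K
  have hfd : FiniteDimensional K NRI.FF := by
    set L : IntermediateField K NRI.FF := IntermediateField.adjoin K {NRI.xx} with hLdef
    haveI hKL : FiniteDimensional K L := IntermediateField.adjoin.finiteDimensional hxint
    have hxL : NRI.xx ∈ L := IntermediateField.mem_adjoin_simple_self K NRI.xx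
    have hτL : τ ∈ L := by
      have h0 : τ = algebraMap K NRI.FF ⟨τ, hτK⟩ := rfl
      rw [h0]
      exact IntermediateField.algebraMap_mem L _
    have hcsL : (∑ s ∈ S.filter (fun s => s.2 = 0), NRI.xx ^ (s.1 : ℕ)) ∈ L :=
      sum_mem (fun s _ => pow_mem hxL _)
    have hbsL : (∑ s ∈ S.filter (fun s => s.2 = 1), NRI.xx ^ (s.1 : ℕ)) ∈ L :=
      sum_mem (fun s _ => pow_mem hxL _)
    have hasL : (∑ s ∈ S.filter (fun s => s.2 = 2), NRI.xx ^ (s.1 : ℕ)) ∈ L :=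
      sum_mem (fun s _ => pow_mem hxL _)
    have hcoe : ∀ (v : NRI.FF) (hv : v ∈ L), algebraMap L NRI.FF ⟨v, hv⟩ = v :=
      fun v hv => rfl
    have hyint : IsIntegral L NRI.yy := by
      set R : Polynomial L :=
          Polynomial.C (⟨_, mul_mem hτL hasL⟩ : L) * Polynomial.X ^ 2
          + Polynomial.C (⟨_, sub_mem (mul_mem hτL hbsL) hxL⟩ : L) * Polynomial.X
          + Polynomial.C (⟨_, mul_mem hτL hcsL⟩ : L) with hRdef
      have hRev : Polynomial.aeval NRI.yy R = 0 := by
        rw [hRdef, map_add, map_add, map_mul, map_mul, map_pow, Polynomial.aeval_X,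
          Polynomial.aeval_C, Polynomial.aeval_C, Polynomial.aeval_C, hcoe, hcoe, hcoe]
        have h := hτP
        rw [hPF2] at h
        linear_combination h
      have hRne : R ≠ 0 := by
        intro h0
        have h1 := congrArg (Polynomial.aeval (0 : NRI.FF)) h0
        rw [hRdef] at h1
        simp only [map_add, map_mul, map_pow, Polynomial.aeval_X, Polynomial.aeval_C,
          map_zero, hcoe, mul_zero, add_zero, zero_add, zero_pow, ne_eq,
          OfNat.ofNat_ne_zero, not_false_iff] at h1
        exact mul_ne_zero hτne hcs h1
      exact IsAlgebraic.isIntegral ⟨R, hRne, hRev⟩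
    haveI hLtopfd : FiniteDimensional L (IntermediateField.adjoin L {NRI.yy}) :=
      IntermediateField.adjoin.finiteDimensional hyint
    have htop : IntermediateField.adjoin L {NRI.yy} = ⊤ := by
      rw [eq_top_iff]
      intro z _
      have hxT : NRI.xx ∈ (IntermediateField.adjoin L {NRI.yy}).toSubfield := by
        have h0 : NRI.xx = algebraMap L NRI.FF ⟨NRI.xx, hxL⟩ := rfl
        rw [h0]
        exact IntermediateField.algebraMap_mem _ _
      have hyT : NRI.yy ∈ (IntermediateField.adjoin L {NRI.yy}).toSubfield :=
        IntermediateField.subset_adjoin L _ (by simp)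
      exact NRI.subfield_eq_top _ hxT hyT z
    haveI hLF' : FiniteDimensional L (⊤ : IntermediateField L NRI.FF) := htop ▸ hLtopfd
    haveI hLF : FiniteDimensional L NRI.FF :=
      (IntermediateField.topEquiv (F := L) (E := NRI.FF)).toLinearEquiv.finiteDimensional
    exact FiniteDimensional.trans K L NRI.FF
  -- Step 12 : the contradiction
  haveI := hfd
  haveI : Finite (NRI.FF ≃ₐ[K] NRI.FF) := by
    haveI := AlgEquiv.fintype K NRI.FF
    exact Finite.of_fintype _
  have hGfin : Finite ↥(SetLike.coe (Subgroup.closure ({φ, ψ} :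
      Set (NRI.FF ≃+* NRI.FF)))) := by
    have hmap : ∀ g : ↥(SetLike.coe (Subgroup.closure ({φ, ψ} :
        Set (NRI.FF ≃+* NRI.FF)))), ∀ r : K,
        (g : NRI.FF ≃+* NRI.FF) (algebraMap K NRI.FF r) = algebraMap K NRI.FF r := by
      intro g r
      exact hKfix g g.2 r r.2
    let Φm : ↥(SetLike.coe (Subgroup.closure ({φ, ψ} : Set (NRI.FF ≃+* NRI.FF)))) →
        (NRI.FF ≃ₐ[K] NRI.FF) :=
      fun g => AlgEquiv.ofRingEquiv (f := (g : NRI.FF ≃+* NRI.FF)) (hmap g)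
    have hΦinj : Function.Injective Φm := by
      intro a b hab
      apply Subtype.ext
      apply RingEquiv.ext
      intro z
      have := congrArg (fun (e : NRI.FF ≃ₐ[K] NRI.FF) => (e : NRI.FF → NRI.FF) z) hab
      exact this
    exact Finite.of_injective Φm hΦinj
  exact hinf (Set.toFinite _)
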